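/- Let β(t) = (q(1−q)μ²/ς²)·(1 − e^{−2α₄ t}) / (α₄ + α₁ + (α₄ − α₁)e^{−2α₄ t}) and define γ(t) = α₃·exp(−∫₀ᵗ (α₁ + α₂β(s)) ds)·∫₀ᵗ β(s)·exp(∫₀ˢ (α₁ + α₂β(u)) du) ds (the solution of γ' = −(α₁+α₂β)γ + α₃β with γ(0) = 0). Then γ(t) → C as t → ∞, and there exists c₀ > 0 such that |C − γ(t)| ≤ c₀·e^{−α₄ t} for all t ≥ 0. -/

import Mathlib

open Filter Topology

theorem KO_aux (a₁ a₂ a₃ a₄ M C : ℝ) (β γ : ℝ → ℝ)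
    (hM : 0 < M) (h4 : 0 < a₄) (hsum : 0 < a₄ + a₁) (hdif : 0 < a₄ - a₁)
    (h2M : a₂ * M = a₄ ^ 2 - a₁ ^ 2)
    (hC : C = a₃ * M / (a₄ * (a₄ + a₁)))
    (hβ : ∀ t, β t = M * (1 - Real.exp (-2 * a₄ * t)) /
        (a₄ + a₁ + (a₄ - a₁) * Real.exp (-2 * a₄ * t)))
    (hγ : ∀ t, γ t = a₃ * Real.exp (-(∫ s in (0 : ℝ)..t, (a₁ + a₂ * β s))) *
        ∫ s in (0 : ℝ)..t, β s * Real.exp (∫ u in (0 : ℝ)..s, (a₁ + a₂ * β u))) :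
    Tendsto γ atTop (𝓝 C) ∧
    ∃ c₀ > (0 : ℝ), ∀ t ≥ (0 : ℝ), |C - γ t| ≤ c₀ * Real.exp (-a₄ * t) := by
  have hDpos : ∀ t : ℝ, 0 < a₄ + a₁ + (a₄ - a₁) * Real.exp (-2 * a₄ * t) := by
    intro t
    have := Real.exp_pos (-2 * a₄ * t)
    nlinarith
  have hE : ∀ s : ℝ, HasDerivAt (fun u : ℝ => Real.exp (-2 * a₄ * u))
      (-2 * a₄ * Real.exp (-2 * a₄ * s)) s := by
    intro s
    have h := ((hasDerivAt_id s).const_mul (-2 * a₄)).exp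
    refine h.congr_deriv ?_
    simp only [id_eq, mul_one]
    ring
  have hDd : ∀ s : ℝ, HasDerivAt (fun u : ℝ => a₄ + a₁ + (a₄ - a₁) * Real.exp (-2 * a₄ * u))
      ((a₄ - a₁) * (-2 * a₄ * Real.exp (-2 * a₄ * s))) s := by
    intro s
    exact ((hE s).const_mul (a₄ - a₁)).const_add (a₄ + a₁)
  have hg : ∀ s : ℝ, HasDerivAt
      (fun u : ℝ => a₄ * u + Real.log (a₄ + a₁ + (a₄ - a₁) * Real.exp (-2 * a₄ * u)))
      (a₁ + a₂ * β s) s := by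
    intro s
    have h := (((hasDerivAt_id s).const_mul a₄).add ((hDd s).log (hDpos s).ne'))
    refine h.congr_deriv ?_
    rw [hβ s]
    have hD := (hDpos s).ne'
    set Ee := Real.exp (-2 * a₄ * s) with hEe
    field_simp
    linear_combination (-(1 - Ee)) * h2M
  have hβc : Continuous β := by
    have hβf : β = fun t => M * (1 - Real.exp (-2 * a₄ * t)) /
        (a₄ + a₁ + (a₄ - a₁) * Real.exp (-2 * a₄ * t)) := funext hβ
    rw [hβf]
    exact Continuous.div (by fun_prop) (by fun_prop) (fun t => (hDpos t).ne')
  have hfc : Continuous (fun s => a₁ + a₂ * β s) := by fun_prop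
  have hI : ∀ t : ℝ, (∫ s in (0 : ℝ)..t, (a₁ + a₂ * β s)) =
      (a₄ * t + Real.log (a₄ + a₁ + (a₄ - a₁) * Real.exp (-2 * a₄ * t))) -
      (a₄ * 0 + Real.log (a₄ + a₁ + (a₄ - a₁) * Real.exp (-2 * a₄ * 0))) := by
    intro t
    exact intervalIntegral.integral_eq_sub_of_hasDerivAt
      (fun x _ => hg x) (hfc.intervalIntegrable 0 t)
  have hexpI : ∀ t : ℝ, Real.exp (∫ s in (0 : ℝ)..t, (a₁ + a₂ * β s)) =
      Real.exp (a₄ * t) * (a₄ + a₁ + (a₄ - a₁) * Real.exp (-2 * a₄ * t)) / (2 * a₄) := by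
    intro t
    rw [hI t]
    have h0 : a₄ + a₁ + (a₄ - a₁) * Real.exp (-2 * a₄ * 0) = 2 * a₄ := by
      norm_num
      ring
    rw [h0]
    rw [Real.exp_sub, Real.exp_add, Real.exp_add, Real.exp_log (hDpos t),
      Real.exp_log (by positivity : (0:ℝ) < 2 * a₄)]
    rw [mul_zero, Real.exp_zero, one_mul]
  have hInt : ∀ s : ℝ, β s * Real.exp (∫ u in (0 : ℝ)..s, (a₁ + a₂ * β u)) =
      M / (2 * a₄) * (Real.exp (a₄ * s) - Real.exp (-a₄ * s)) := by
    intro s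
    rw [hβ s, hexpI s]
    have hD := (hDpos s).ne'
    have h1 : Real.exp (a₄ * s) = (Real.exp (-a₄ * s))⁻¹ := by
      rw [← Real.exp_neg]; ring_nf
    have h2 : Real.exp (-2 * a₄ * s) = (Real.exp (-a₄ * s)) ^ 2 := by
      rw [sq, ← Real.exp_add]; ring_nf
    rw [h1, h2]
    have hε := (Real.exp_pos (-a₄ * s)).ne'
    rw [h2] at hD
    field_simp
  have hG : ∀ s : ℝ, HasDerivAt (fun u : ℝ => M / (2 * a₄ ^ 2) *
      (Real.exp (a₄ * u) + Real.exp (-a₄ * u)))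
      (M / (2 * a₄) * (Real.exp (a₄ * s) - Real.exp (-a₄ * s))) s := by
    intro s
    have h1 := ((hasDerivAt_id s).const_mul a₄).exp
    have h2 := ((hasDerivAt_id s).const_mul (-a₄)).exp
    have h := (h1.add h2).const_mul (M / (2 * a₄ ^ 2))
    refine h.congr_deriv ?_
    simp only [id_eq]
    field_simp
    ring
  have hInner : ∀ t : ℝ,
      (∫ s in (0 : ℝ)..t, β s * Real.exp (∫ u in (0 : ℝ)..s, (a₁ + a₂ * β u))) =
      M / (2 * a₄ ^ 2) * (Real.exp (a₄ * t) + Real.exp (-a₄ * t) - 2) := by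
    intro t
    have heq : (∫ s in (0 : ℝ)..t, β s * Real.exp (∫ u in (0 : ℝ)..s, (a₁ + a₂ * β u))) =
        ∫ s in (0 : ℝ)..t, M / (2 * a₄) * (Real.exp (a₄ * s) - Real.exp (-a₄ * s)) := by
      simp only [hInt]
    rw [heq, intervalIntegral.integral_eq_sub_of_hasDerivAt (fun x _ => hG x)
      (by apply Continuous.intervalIntegrable; fun_prop)]
    norm_num
    ring
  have hγ' : ∀ t : ℝ, γ t = a₃ * M * (1 - Real.exp (-a₄ * t)) ^ 2 /
      (a₄ * (a₄ + a₁ + (a₄ - a₁) * Real.exp (-2 * a₄ * t))) := by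
    intro t
    rw [hγ t, hInner t, Real.exp_neg, hexpI t]
    have hD := (hDpos t).ne'
    have h1 : Real.exp (a₄ * t) = (Real.exp (-a₄ * t))⁻¹ := by
      rw [← Real.exp_neg]; ring_nf
    have h2 : Real.exp (-2 * a₄ * t) = (Real.exp (-a₄ * t)) ^ 2 := by
      rw [sq, ← Real.exp_add]; ring_nf
    rw [h1, h2]
    rw [h2] at hD
    have hε := (Real.exp_pos (-a₄ * t)).ne'
    field_simp
    ring
  have hkey : ∀ t : ℝ, C - γ t = a₃ * M * (2 * Real.exp (-a₄ * t) *
      ((a₄ + a₁) - a₁ * Real.exp (-a₄ * t))) /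
      (a₄ * (a₄ + a₁) * (a₄ + a₁ + (a₄ - a₁) * Real.exp (-2 * a₄ * t))) := by
    intro t
    rw [hγ' t, hC]
    have hD := (hDpos t).ne'
    have h2 : Real.exp (-2 * a₄ * t) = (Real.exp (-a₄ * t)) ^ 2 := by
      rw [sq, ← Real.exp_add]; ring_nf
    rw [h2]
    rw [h2] at hD
    field_simp
    ring
  set P : ℝ := a₄ * (a₄ + a₁) ^ 2 with hP
  set c₁ : ℝ := |a₃| * M * (2 * ((a₄ + a₁) + |a₁|)) with hc₁
  have hc₁nn : 0 ≤ c₁ := by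
    have := abs_nonneg a₃
    have := abs_nonneg a₁
    positivity
  set c₀ : ℝ := (c₁ + 1) / P with hc₀
  have hPpos : 0 < P := by positivity
  have hc₀pos : 0 < c₀ := by positivity
  have hbound : ∀ t ≥ (0 : ℝ), |C - γ t| ≤ c₀ * Real.exp (-a₄ * t) := by
    intro t ht
    have hε0 : 0 < Real.exp (-a₄ * t) := Real.exp_pos _
    have hε1 : Real.exp (-a₄ * t) ≤ 1 := by
      rw [← Real.exp_zero]
      apply Real.exp_le_exp.mpr
      nlinarith
    have hDpt := hDpos t
    have hY : 0 < a₄ * (a₄ + a₁) * (a₄ + a₁ + (a₄ - a₁) * Real.exp (-2 * a₄ * t)) := by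
      positivity
    rw [hkey t, abs_div, abs_of_pos hY, div_le_iff₀ hY]
    have hW : |(a₄ + a₁) - a₁ * Real.exp (-a₄ * t)| ≤ (a₄ + a₁) + |a₁| := by
      apply abs_le.2
      constructor <;> nlinarith [le_abs_self a₁, neg_abs_le a₁]
    have hL1 : |a₃ * M * (2 * Real.exp (-a₄ * t) * ((a₄ + a₁) - a₁ * Real.exp (-a₄ * t)))| ≤
        c₁ * Real.exp (-a₄ * t) := by
      rw [abs_mul, abs_mul, abs_mul, abs_of_pos hM,
        abs_of_pos (show (0:ℝ) < 2 * Real.exp (-a₄ * t) by positivity)]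
      calc |a₃| * M * (2 * Real.exp (-a₄ * t) * |(a₄ + a₁) - a₁ * Real.exp (-a₄ * t)|)
          ≤ |a₃| * M * (2 * Real.exp (-a₄ * t) * ((a₄ + a₁) + |a₁|)) := by
            gcongr
        _ = c₁ * Real.exp (-a₄ * t) := by rw [hc₁]; ring
    have hPY : P ≤ a₄ * (a₄ + a₁) * (a₄ + a₁ + (a₄ - a₁) * Real.exp (-2 * a₄ * t)) := by
      nlinarith [mul_pos (mul_pos h4 hsum) (mul_pos hdif (Real.exp_pos (-2 * a₄ * t)))]
    have h5 : c₀ * Real.exp (-a₄ * t) * P = (c₁ + 1) * Real.exp (-a₄ * t) := by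
      rw [hc₀]; field_simp
    have h6 : c₀ * Real.exp (-a₄ * t) * P ≤ c₀ * Real.exp (-a₄ * t) *
        (a₄ * (a₄ + a₁) * (a₄ + a₁ + (a₄ - a₁) * Real.exp (-2 * a₄ * t))) := by
      apply mul_le_mul_of_nonneg_left hPY
      positivity
    linarith [hL1, h5, h6, hε0]
  refine ⟨?_, c₀, hc₀pos, hbound⟩
  have hb : Tendsto (fun t : ℝ => -a₄ * t) atTop atBot :=
    Tendsto.const_mul_atTop_of_neg (by linarith : -a₄ < 0) tendsto_id
  have h0' : Tendsto (fun t : ℝ => Real.exp (-a₄ * t)) atTop (𝓝 0) :=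
    Real.tendsto_exp_atBot.comp hb
  have h0 : Tendsto (fun t : ℝ => c₀ * Real.exp (-a₄ * t)) atTop (𝓝 0) := by
    have := h0'.const_mul c₀
    simpa using this
  have h1 : Tendsto (fun t => C - γ t) atTop (𝓝 0) := by
    apply squeeze_zero_norm' _ h0
    filter_upwards [eventually_ge_atTop (0 : ℝ)] with t ht
    simpa using hbound t ht
  have h1' : Tendsto (fun t => γ t - C) atTop (𝓝 0) := by
    have := h1.neg
    simp only [neg_sub, neg_zero] at this
    exact this
  exact tendsto_sub_nhds_zero_iff.mp h1'
open Filter Topology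

/-- Kim–Omberg model: the solution
`γ(t) = α₃ e^{-∫₀ᵗ(α₁+α₂β)} ∫₀ᵗ β(s) e^{∫₀ˢ(α₁+α₂β)} ds` of
`γ' = -(α₁+α₂β)γ + α₃β`, `γ(0)=0`, converges to `C` as `t → ∞`, and there exists `c₀ > 0`
with `|C - γ(t)| ≤ c₀ e^{-α₄ t}` for all `t ≥ 0`. -/
theorem stmt6 (k m μ ς σ ρ q : ℝ)
    (hk : 0 < k) (hμ : μ ≠ 0) (hς : 0 < ς) (hσ : 0 < σ)
    (hρ : ρ ∈ Set.Ioo (-1 : ℝ) 1) (hq : q ∈ Set.Ioo (0 : ℝ) 1)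
    (σ₁ σ₂ α₁ α₂ α₃ α₄ B C : ℝ)
    (hσ₁ : σ₁ = ρ * σ) (hσ₂ : σ₂ = Real.sqrt (1 - ρ ^ 2) * σ)
    (hα₁ : α₁ = k + q * μ * σ₁ / ς) (hα₂ : α₂ = σ₁ ^ 2 + σ₂ ^ 2 / (1 - q))
    (hα₃ : α₃ = k * m)
    (hα₄ : α₄ = Real.sqrt (α₁ ^ 2 + q * (1 - q) * α₂ * μ ^ 2 / ς ^ 2))
    (hB : B = (α₄ - α₁) / α₂) (hC : C = α₃ * (α₄ - α₁) / (α₂ * α₄))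
    (β γ : ℝ → ℝ)
    (hβ : ∀ t, β t = (q * (1 - q) * μ ^ 2 / ς ^ 2) * (1 - Real.exp (-2 * α₄ * t)) /
        (α₄ + α₁ + (α₄ - α₁) * Real.exp (-2 * α₄ * t)))
    (hγ : ∀ t, γ t = α₃ * Real.exp (-(∫ s in (0 : ℝ)..t, (α₁ + α₂ * β s))) *
        ∫ s in (0 : ℝ)..t, β s * Real.exp (∫ u in (0 : ℝ)..s, (α₁ + α₂ * β u))) :
    Tendsto γ atTop (𝓝 C) ∧
    ∃ c₀ > (0 : ℝ), ∀ t ≥ (0 : ℝ), |C - γ t| ≤ c₀ * Real.exp (-α₄ * t) := by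
  obtain ⟨hρ1, hρ2⟩ := hρ
  obtain ⟨hq0, hq1⟩ := hq
  have h1q : 0 < 1 - q := by linarith
  have hμ2 : 0 < μ ^ 2 := by positivity
  have hMpos : 0 < q * (1 - q) * μ ^ 2 / ς ^ 2 := by positivity
  have hρsq : 0 < 1 - ρ ^ 2 := by nlinarith
  have hσ₂sq : σ₂ ^ 2 = (1 - ρ ^ 2) * σ ^ 2 := by
    rw [hσ₂, mul_pow, Real.sq_sqrt hρsq.le]
  have hσ₂pos : 0 < σ₂ ^ 2 := by rw [hσ₂sq]; positivity
  have hα₂pos : 0 < α₂ := by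
    rw [hα₂]
    have h1 : 0 ≤ σ₁ ^ 2 := sq_nonneg σ₁
    have h2 : 0 < σ₂ ^ 2 / (1 - q) := by positivity
    linarith
  have harg : (0 : ℝ) ≤ α₁ ^ 2 + q * (1 - q) * α₂ * μ ^ 2 / ς ^ 2 := by
    have : 0 < q * (1 - q) * α₂ * μ ^ 2 / ς ^ 2 := by positivity
    nlinarith [sq_nonneg α₁]
  have hα₄sq : α₄ ^ 2 = α₁ ^ 2 + α₂ * (q * (1 - q) * μ ^ 2 / ς ^ 2) := by
    rw [hα₄, Real.sq_sqrt harg]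
    field_simp
  have h2M : α₂ * (q * (1 - q) * μ ^ 2 / ς ^ 2) = α₄ ^ 2 - α₁ ^ 2 := by linarith
  have hα₄nn : 0 ≤ α₄ := hα₄ ▸ Real.sqrt_nonneg _
  have hprod : 0 < α₂ * (q * (1 - q) * μ ^ 2 / ς ^ 2) := mul_pos hα₂pos hMpos
  have hsq : α₁ ^ 2 < α₄ ^ 2 := by linarith
  have habs : |α₁| < α₄ := by
    have h := Real.sqrt_lt_sqrt (sq_nonneg α₁) hsq
    rwa [Real.sqrt_sq_eq_abs, Real.sqrt_sq hα₄nn] at h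
  obtain ⟨hl, hr⟩ := abs_lt.mp habs
  have h4 : 0 < α₄ := lt_of_le_of_lt (abs_nonneg α₁) habs
  have hsum : 0 < α₄ + α₁ := by linarith
  have hdif : 0 < α₄ - α₁ := by linarith
  have hC' : C = α₃ * (q * (1 - q) * μ ^ 2 / ς ^ 2) / (α₄ * (α₄ + α₁)) := by
    rw [hC]
    rw [div_eq_div_iff (by positivity) (by positivity)]
    linear_combination (-α₃ * α₄) * h2M
  exact KO_aux α₁ α₂ α₃ α₄ (q * (1 - q) * μ ^ 2 / ς ^ 2) C β γ
    hMpos h4 hsum hdif h2M hC' hβ hγ
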